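/- arXiv:1811.07148 — 2 statements merged into one kernel-verified Lean document; each statement's English description precedes it below -/
import Mathlib

section
/- Let f : 𝓔 → 𝓖 be an orthogonally a-Jensen mapping. Then for every x ∈ 𝓔 one has (iii) f(a⁻¹·x) + a⁻¹(1−a)·f(0) = a⁻¹·f(x) and (iv) (1−a)⁻¹a·f(0) + f((1−a)⁻¹·x) = (1−a)⁻¹·f(x). -/
open scoped RightActions

/-- The Dec 2024 Mathlib `CStarModule` (right `Aᵐᵒᵖ`-action, inner product right `A`-linear). -/
class RightCStarModule (A E : Type*) [NonUnitalSemiring A] [StarRing A]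
    [Module ℂ A] [AddCommGroup E] [Module ℂ E] [PartialOrder A] [SMul Aᵐᵒᵖ E] [Norm A] [Norm E]
    extends Inner A E where
  inner_add_right {x} {y} {z} : inner x (y + z) = inner x y + inner x z
  inner_self_nonneg {x} : 0 ≤ inner x x
  inner_self {x} : inner x x = 0 ↔ x = 0
  inner_op_smul_right {a : A} {x y : E} : inner x (y <• a) = inner x y * a
  inner_smul_right_complex {z : ℂ} {x} {y} : inner x (z • y) = z • inner x y
  star_inner x y : star (inner x y) = inner y x
  norm_eq_sqrt_norm_inner_self x : ‖x‖ = √‖inner x x‖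

variable {A : Type*} [CStarAlgebra A] [PartialOrder A] [StarOrderedRing A]
variable {E : Type*} [NormedAddCommGroup E] [Module ℂ E] [Module Aᵐᵒᵖ E] [RightCStarModule A E]
variable {F : Type*} [NormedAddCommGroup F] [Module ℂ F] [Module Aᵐᵒᵖ F] [RightCStarModule A F]
variable {G : Type*} [NormedAddCommGroup G] [Module ℂ G] [Module Aᵐᵒᵖ G] [RightCStarModule A G]

/-- A mapping `f : E → G` between inner product `A`-modules is *orthogonally `a`-Jensen* if
`⟪x, y⟫ = 0` implies `f (a·x + (1-a)·y) = a·f x + (1-a)·f y` (module actions written as right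
actions `<•`, since `E`, `G` are right `A`-modules). -/
def OrthAJensen (a : A) (f : E → G) : Prop :=
  ∀ x y : E, inner (𝕜 := A) x y = 0 →
    f (x <• a + y <• (1 - a)) = f x <• a + f y <• (1 - a)

set_option linter.unusedSectionVars false in
lemma inner_zero_right' (x : E) : inner (𝕜 := A) x (0 : E) = 0 := by
  have h := RightCStarModule.inner_add_right (A := A) (x := x) (y := (0:E)) (z := 0)
  simpa using h

set_option linter.unusedSectionVars false in
lemma inner_zero_left' (y : E) : inner (𝕜 := A) (0 : E) y = 0 := by
  rw [← RightCStarModule.star_inner, inner_zero_right', star_zero]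

set_option linter.unusedSectionVars false in
lemma smul_smul' (v : G) (b c : A) : (v <• b) <• c = v <• (b * c) := by
  show MulOpposite.op c • MulOpposite.op b • v = MulOpposite.op (b*c) • v
  rw [smul_smul, ← MulOpposite.op_mul]


/-- Lemma 2.1 (iii), (iv): if `f` is orthogonally `a`-Jensen then
`f(a⁻¹·x) + a⁻¹(1-a)·f 0 = a⁻¹·f x` and `(1-a)⁻¹a·f 0 + f((1-a)⁻¹·x) = (1-a)⁻¹·f x`. -/
theorem lemma21_iii_iv (a : A) [Invertible a] [Invertible (1 - a)] (f : E → G)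
    (hf : OrthAJensen a f) (x : E) :
    f (x <• (⅟a)) + f 0 <• (⅟a * (1 - a)) = f x <• (⅟a) ∧
    f 0 <• (⅟(1 - a) * a) + f (x <• (⅟(1 - a))) = f x <• (⅟(1 - a)) := by
  constructor
  · have h := hf (x <• (⅟a)) 0 (inner_zero_right' _)
    have h2 : (x <• (⅟a)) <• a + (0 : E) <• (1 - a) = x := by
      rw [smul_smul', invOf_mul_self]; simp
    rw [h2] at h
    have := congrArg (fun v => v <• (⅟a)) h
    simp only [smul_add, smul_smul'] at this ⊢
    rw [this, mul_invOf_self]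
    have : (1 - a) * ⅟a = ⅟a * (1 - a) := by
      simp [mul_sub, sub_mul]
    simp [this]
  · have h := hf 0 (x <• (⅟(1 - a))) (inner_zero_left' _)
    have h2 : (0 : E) <• a + (x <• (⅟(1 - a))) <• (1 - a) = x := by
      rw [smul_smul', invOf_mul_self]; simp
    rw [h2] at h
    have := congrArg (fun v => v <• (⅟(1-a))) h
    simp only [smul_add, smul_smul'] at this ⊢
    rw [this, mul_invOf_self]
    have : a * ⅟(1-a) = ⅟(1-a) * a := by
      have h1 : a * ⅟(1-a) = ⅟(1-a) - 1 := by
        calc a * ⅟(1-a) = (1 - (1-a)) * ⅟(1-a) := by rw [sub_sub_cancel]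
          _ = ⅟(1-a) - 1 := by rw [sub_mul, one_mul, mul_invOf_self]
      have h3 : ⅟(1-a) * a = ⅟(1-a) - 1 := by
        calc ⅟(1-a) * a = ⅟(1-a) * (1 - (1-a)) := by rw [sub_sub_cancel]
          _ = ⅟(1-a) - 1 := by rw [mul_sub, mul_one, invOf_mul_self]
      rw [h1, h3]
    simp [this]
end

section
/- Suppose φ, ψ : 𝓕 → 𝓔 are additive mappings such that ⟨φ(z), ψ(w)⟩ = 0 and a·⟨φ(z), φ(w)⟩·a* = (1−a)·⟨ψ(z), ψ(w)⟩·(1−a)* for all z, w ∈ 𝓕, and set 𝓚 := φ(𝓕) + ψ(𝓕) = {φ(x) + ψ(y) : x, y ∈ 𝓕}. If f : 𝓔 → 𝓖 is an even orthogonally a-Jensen mapping (f(−x) = f(x) for all x) with f(0) = 0, then f is quadratic on 𝓚, i.e. f(z₁ + z₂) + f(z₁ − z₂) = 2 f(z₁) + 2 f(z₂) for all z₁, z₂ ∈ 𝓚. -/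
set_option linter.unusedSectionVars false


open scoped RightActions

variable {A : Type*} [CStarAlgebra A] [PartialOrder A] [StarOrderedRing A]
variable {E : Type*} [NormedAddCommGroup E] [Module ℂ E] [Module Aᵐᵒᵖ E] [RightCStarModule A E]
variable {F : Type*} [NormedAddCommGroup F] [Module ℂ F] [Module Aᵐᵒᵖ F] [RightCStarModule A F]
variable {G : Type*} [NormedAddCommGroup G] [Module ℂ G] [Module Aᵐᵒᵖ G] [RightCStarModule A G]

namespace RightCStarModule

@[simp] lemma inner_zero_right' {x : E} : inner (𝕜 := A) x (0 : E) = 0 := by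
  have h := RightCStarModule.inner_add_right (A := A) (x := x) (y := (0 : E)) (z := 0)
  rw [add_zero] at h
  calc inner (𝕜 := A) x (0 : E) = inner (𝕜 := A) x 0 + inner (𝕜 := A) x 0 - inner (𝕜 := A) x 0 := by
        abel
    _ = 0 := by rw [← h, sub_self]

@[simp] lemma inner_zero_left' {y : E} : inner (𝕜 := A) (0 : E) y = 0 := by
  rw [← RightCStarModule.star_inner, inner_zero_right', star_zero]

lemma inner_add_left {x y z : E} :
    inner (𝕜 := A) (x + y) z = inner (𝕜 := A) x z + inner (𝕜 := A) y z := by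
  rw [← RightCStarModule.star_inner, RightCStarModule.inner_add_right, star_add,
    RightCStarModule.star_inner, RightCStarModule.star_inner]

lemma inner_neg_right {x y : E} : inner (𝕜 := A) x (-y) = -inner (𝕜 := A) x y := by
  have h := RightCStarModule.inner_add_right (A := A) (x := x) (y := -y) (z := y)
  rw [neg_add_cancel, inner_zero_right'] at h
  exact eq_neg_of_add_eq_zero_left h.symm

lemma inner_sub_right {x y z : E} :
    inner (𝕜 := A) x (y - z) = inner (𝕜 := A) x y - inner (𝕜 := A) x z := by
  rw [sub_eq_add_neg, RightCStarModule.inner_add_right, inner_neg_right, ← sub_eq_add_neg]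

lemma inner_op_smul_left {a : A} {x y : E} :
    inner (𝕜 := A) (x <• a) y = star a * inner (𝕜 := A) x y := by
  rw [← RightCStarModule.star_inner, RightCStarModule.inner_op_smul_right, star_mul,
    RightCStarModule.star_inner]

end RightCStarModule

lemma rsmul_rsmul (x : E) (b c : A) : (x <• b) <• c = x <• (b * c) := by
  show MulOpposite.op c • MulOpposite.op b • x = MulOpposite.op (b * c) • x
  rw [smul_smul, ← MulOpposite.op_mul]

/-- star of the `invOf` of `star a`. -/
lemma star_invOf_star' (a : A) [Invertible a] : star (⅟(star a)) = ⅟a := by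
  symm
  apply invOf_eq_left_inv
  have : star (⅟(star a)) * a = star (star a * ⅟(star a)) := by
    rw [star_mul, star_star]
  rw [this, mul_invOf_self, star_one]

/-- Orthogonal additivity of an orthogonally `a`-Jensen map with `f 0 = 0`. -/
lemma orth_add {a : A} [Invertible a] [Invertible (1 - a)] {f : E → G}
    (hf : OrthAJensen a f) (hf0 : f 0 = 0) {x y : E}
    (h : inner (𝕜 := A) x y = 0) : f (x + y) = f x + f y := by
  have hx : f x = f (x <• ⅟a) <• a := by
    have h0 : inner (𝕜 := A) (x <• ⅟a) (0 : E) = 0 := by simp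
    have := hf (x <• ⅟a) 0 h0
    rw [rsmul_rsmul, invOf_mul_self] at this
    simpa [hf0] using this
  have hy : f y = f (y <• ⅟(1 - a)) <• (1 - a) := by
    have h0 : inner (𝕜 := A) (0 : E) (y <• ⅟(1 - a)) = 0 := by simp
    have := hf 0 (y <• ⅟(1 - a)) h0
    rw [rsmul_rsmul, invOf_mul_self] at this
    simpa [hf0] using this
  have horth : inner (𝕜 := A) (x <• ⅟a) (y <• ⅟(1 - a)) = 0 := by
    rw [RightCStarModule.inner_op_smul_right, RightCStarModule.inner_op_smul_left, h,
      mul_zero, zero_mul]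
  have := hf (x <• ⅟a) (y <• ⅟(1 - a)) horth
  rw [rsmul_rsmul, rsmul_rsmul, invOf_mul_self, invOf_mul_self] at this
  simp only [MulOpposite.op_one, one_smul] at this
  rw [this, ← hx, ← hy]

/-- Key lemma: if `q` is a "companion" of `p` (same Gram structure, ranges orthogonal),
then `f ∘ p` is quadratic. -/
lemma quad_of_companion {a : A} [Invertible a] [Invertible (1 - a)] {f : E → G}
    (hf : OrthAJensen a f) (heven : ∀ x : E, f (-x) = f x) (hf0 : f 0 = 0)
    (p q : F → E)
    (hp : ∀ z w, p (z + w) = p z + p w)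
    (hq : ∀ z w, q (z + w) = q z + q w)
    (hpq : ∀ z w, inner (𝕜 := A) (p z) (q w) = 0)
    (hqq : ∀ z w, inner (𝕜 := A) (q z) (q w) = inner (𝕜 := A) (p z) (p w)) :
    ∀ z w, f (p z + p w) + f (p z - p w) = 2 • f (p z) + 2 • f (p w) := by
  have p0 : p 0 = 0 := by have := hp 0 0; simpa using this.symm
  have q0 : q 0 = 0 := by have := hq 0 0; simpa using this.symm
  have pneg : ∀ z, p (-z) = -p z := by
    intro z
    have h1 := hp z (-z)
    rw [add_neg_cancel, p0] at h1
    exact (neg_eq_of_add_eq_zero_right h1.symm).symm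
  have qneg : ∀ z, q (-z) = -q z := by
    intro z
    have h1 := hq z (-z)
    rw [add_neg_cancel, q0] at h1
    exact (neg_eq_of_add_eq_zero_right h1.symm).symm
  have psub : ∀ z w, p (z - w) = p z - p w := by
    intro z w
    rw [sub_eq_add_neg, hp, pneg, sub_eq_add_neg]
  have qsub : ∀ z w, q (z - w) = q z - q w := by
    intro z w
    rw [sub_eq_add_neg, hq, qneg, sub_eq_add_neg]
  have hqp : ∀ z w, inner (𝕜 := A) (q z) (p w) = 0 := by
    intro z w
    rw [← RightCStarModule.star_inner, hpq, star_zero]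
  -- the fundamental functional equation
  have E : ∀ z w, f (p (z + w)) + f (q (z - w))
      = f (p z) + f (p w) + f (q z) + f (q w) := by
    intro z w
    have o1 : inner (𝕜 := A) (p z + q z) (p w - q w) = 0 := by
      rw [RightCStarModule.inner_add_left, RightCStarModule.inner_sub_right,
        RightCStarModule.inner_sub_right, hpq, hqq, hqp, sub_zero, zero_sub]
      abel
    have e1 := orth_add hf hf0 o1
    have o2 : inner (𝕜 := A) (p z + p w) (q z - q w) = 0 := by
      rw [RightCStarModule.inner_add_left, RightCStarModule.inner_sub_right,
        RightCStarModule.inner_sub_right, hpq, hpq, hpq, hpq]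
      abel
    have e2 := orth_add hf hf0 o2
    have regroup : p z + q z + (p w - q w) = p z + p w + (q z - q w) := by abel
    rw [regroup, e2] at e1
    have e3 : f (p z + q z) = f (p z) + f (q z) := orth_add hf hf0 (hpq z z)
    have e4 : f (p w - q w) = f (p w) + f (q w) := by
      have o4 : inner (𝕜 := A) (p w) (-(q w)) = 0 := by
        rw [RightCStarModule.inner_neg_right, hpq, neg_zero]
      have := orth_add hf hf0 o4
      rw [← sub_eq_add_neg] at this
      rw [this, heven]
    rw [e3, e4] at e1
    rw [hp, qsub, e1]
    abel
  -- f ∘ p = f ∘ q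
  have hfeq : ∀ u, f (p u) = f (q u) := by
    intro u
    set z : F := (2⁻¹ : ℂ) • u with hz
    have hzz : z + z = u := by
      rw [hz, ← add_smul]
      norm_num
    have E1 := E z z
    rw [hzz, sub_self, q0, hf0, add_zero] at E1
    have E2 := E z (-z)
    rw [add_neg_cancel, p0, hf0, zero_add, sub_neg_eq_add, hzz, pneg, qneg,
      heven, heven] at E2
    rw [E1, E2]
  intro z w
  have E0 := E z w
  rw [← hfeq (z - w), hp z w, psub z w] at E0
  rw [E0, ← hfeq z, ← hfeq w, two_smul, two_smul]
  abel


/-- Proposition 2.5: an even orthogonally `a`-Jensen mapping with `f 0 = 0` is quadratic on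
`K = φ(F) + ψ(F)`. -/
theorem even_quadratic_on_K (a : A) [Invertible a] [Invertible (1 - a)] (φ ψ : F → E)
    (hφ : ∀ z w : F, φ (z + w) = φ z + φ w)
    (hψ : ∀ z w : F, ψ (z + w) = ψ z + ψ w)
    (horth : ∀ z w : F, inner (𝕜 := A) (φ z) (ψ w) = 0)
    (heq : ∀ z w : F,
      a * inner (𝕜 := A) (φ z) (φ w) * star a
        = (1 - a) * inner (𝕜 := A) (ψ z) (ψ w) * star (1 - a))
    (f : E → G) (hf : OrthAJensen a f) (heven : ∀ x : E, f (-x) = f x) (hf0 : f 0 = 0) :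
    ∀ z₁ z₂ : E, (∃ x y : F, z₁ = φ x + ψ y) → (∃ x y : F, z₂ = φ x + ψ y) →
      f (z₁ + z₂) + f (z₁ - z₂) = 2 • f z₁ + 2 • f z₂ := by
  have hstara : star (⅟(star a)) = ⅟a := star_invOf_star' a
  have hstara' : star (⅟(star (1 - a))) = ⅟(1 - a) := star_invOf_star' (1 - a)
  -- companion of φ
  set t : A := star (1 - a) * ⅟(star a) with ht
  have Cφ := quad_of_companion hf heven hf0 φ (fun z => ψ z <• t)
    hφ
    (by intro z w; show (ψ (z + w)) <• t = _; rw [hψ]; exact smul_add _ _ _)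
    (by intro z w
        show inner (𝕜 := A) (φ z) ((ψ w) <• t) = 0
        rw [RightCStarModule.inner_op_smul_right, horth, zero_mul])
    (by intro z w
        show inner (𝕜 := A) ((ψ z) <• t) ((ψ w) <• t) = _
        rw [RightCStarModule.inner_op_smul_right, RightCStarModule.inner_op_smul_left, ht]
        rw [star_mul, hstara, star_star]
        calc ⅟a * (1 - a) * inner (𝕜 := A) (ψ z) (ψ w) * (star (1 - a) * ⅟(star a))
            = ⅟a * ((1 - a) * inner (𝕜 := A) (ψ z) (ψ w) * star (1 - a)) * ⅟(star a) := by
              simp only [mul_assoc]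
          _ = ⅟a * (a * inner (𝕜 := A) (φ z) (φ w) * star a) * ⅟(star a) := by
              rw [← heq]
          _ = inner (𝕜 := A) (φ z) (φ w) := by
              simp only [mul_assoc, mul_invOf_self, mul_one, invOf_mul_cancel_left])
  -- companion of ψ
  set t' : A := star a * ⅟(star (1 - a)) with ht'
  have Cψ := quad_of_companion hf heven hf0 ψ (fun z => φ z <• t')
    hψ
    (by intro z w; show (φ (z + w)) <• t' = _; rw [hφ]; exact smul_add _ _ _)
    (by intro z w
        show inner (𝕜 := A) (ψ z) ((φ w) <• t') = 0
        rw [RightCStarModule.inner_op_smul_right, ← RightCStarModule.star_inner, horth,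
          star_zero, zero_mul])
    (by intro z w
        show inner (𝕜 := A) ((φ z) <• t') ((φ w) <• t') = _
        rw [RightCStarModule.inner_op_smul_right, RightCStarModule.inner_op_smul_left, ht']
        rw [star_mul, hstara', star_star]
        calc ⅟(1 - a) * a * inner (𝕜 := A) (φ z) (φ w) * (star a * ⅟(star (1 - a)))
            = ⅟(1 - a) * (a * inner (𝕜 := A) (φ z) (φ w) * star a) * ⅟(star (1 - a)) := by
              simp only [mul_assoc]
          _ = ⅟(1 - a) * ((1 - a) * inner (𝕜 := A) (ψ z) (ψ w) * star (1 - a))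
                * ⅟(star (1 - a)) := by rw [heq]
          _ = inner (𝕜 := A) (ψ z) (ψ w) := by
              simp only [mul_assoc, mul_invOf_self, mul_one, invOf_mul_cancel_left])
  have φ0 : φ 0 = 0 := by have := hφ 0 0; simpa using this.symm
  have φneg : ∀ z, φ (-z) = -φ z := by
    intro z
    have h1 := hφ z (-z)
    rw [add_neg_cancel, φ0] at h1
    exact (neg_eq_of_add_eq_zero_right h1.symm).symm
  have φsub : ∀ z w, φ z - φ w = φ (z - w) := by
    intro z w
    rw [sub_eq_add_neg, ← φneg, ← hφ, sub_eq_add_neg]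
  have ψ0 : ψ 0 = 0 := by have := hψ 0 0; simpa using this.symm
  have ψneg : ∀ z, ψ (-z) = -ψ z := by
    intro z
    have h1 := hψ z (-z)
    rw [add_neg_cancel, ψ0] at h1
    exact (neg_eq_of_add_eq_zero_right h1.symm).symm
  have ψsub : ∀ z w, ψ z - ψ w = ψ (z - w) := by
    intro z w
    rw [sub_eq_add_neg, ← ψneg, ← hψ, sub_eq_add_neg]
  rintro z₁ z₂ ⟨x₁, y₁, rfl⟩ ⟨x₂, y₂, rfl⟩
  have hsum : φ x₁ + ψ y₁ + (φ x₂ + ψ y₂) = φ (x₁ + x₂) + ψ (y₁ + y₂) := by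
    rw [hφ, hψ]; abel
  have hdiff : φ x₁ + ψ y₁ - (φ x₂ + ψ y₂) = φ (x₁ - x₂) + ψ (y₁ - y₂) := by
    rw [← φsub, ← ψsub]; abel
  rw [hsum, hdiff, orth_add hf hf0 (horth _ _), orth_add hf hf0 (horth _ _),
    orth_add hf hf0 (horth x₁ y₁), orth_add hf hf0 (horth x₂ y₂)]
  have C1 := Cφ x₁ x₂
  rw [← hφ, φsub] at C1
  have C2 := Cψ y₁ y₂
  rw [← hψ, ψsub] at C2
  calc f (φ (x₁ + x₂)) + f (ψ (y₁ + y₂)) + (f (φ (x₁ - x₂)) + f (ψ (y₁ - y₂)))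
      = (f (φ (x₁ + x₂)) + f (φ (x₁ - x₂))) + (f (ψ (y₁ + y₂)) + f (ψ (y₁ - y₂))) := by
        abel
    _ = (2 • f (φ x₁) + 2 • f (φ x₂)) + (2 • f (ψ y₁) + 2 • f (ψ y₂)) := by
        rw [C1, C2]
    _ = 2 • (f (φ x₁) + f (ψ y₁)) + 2 • (f (φ x₂) + f (ψ y₂)) := by
        simp only [smul_add]; abel
end
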